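/- For delayed gradient descent-ascent z_{k+1} = z_k − αΦ(z_{k−τ_k}) applied to a μ-strongly convex-strongly concave f with L-Lipschitz partial gradients and delays bounded by τ_max, the error e_k = Φ(z_k) − Φ(z_{k−τ_k}) satisfies ‖e_k‖ ≤ 2α L τ_max (4L²/μ + 4L) · max_{k−2τ_max ≤ t ≤ k} ‖z_t − z*‖, where z* is the saddle point. -/

import Mathlib

set_option maxHeartbeats 1000000

private lemma grad_eq_zero_of_isMin {F : Type*} [NormedAddCommGroup F] [InnerProductSpace ℝ F]
    [CompleteSpace F] {f : F → ℝ} {g x : F} (hg : HasGradientAt f g x)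
    (hmin : ∀ y, f x ≤ f y) : g = 0 := by
  have h : IsLocalMin f x := Filter.Eventually.of_forall hmin
  have h2 := h.hasFDerivAt_eq_zero hg.hasFDerivAt
  have h3 := congrArg (InnerProductSpace.toDual ℝ F).symm h2
  simpa using h3

private lemma grad_eq_zero_of_isMax {F : Type*} [NormedAddCommGroup F] [InnerProductSpace ℝ F]
    [CompleteSpace F] {f : F → ℝ} {g x : F} (hg : HasGradientAt f g x)
    (hmax : ∀ y, f y ≤ f x) : g = 0 := by
  have h : IsLocalMax f x := Filter.Eventually.of_forall hmax
  have h2 := h.hasFDerivAt_eq_zero hg.hasFDerivAt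
  have h3 := congrArg (InnerProductSpace.toDual ℝ F).symm h2
  simpa using h3

private lemma telescope_norm_le {E : Type*} [NormedAddCommGroup E] (z : ℕ → E) :
    ∀ k a : ℕ, a ≤ k → ‖z k - z a‖ ≤ ∑ j ∈ Finset.Ico a k, ‖z (j + 1) - z j‖ := by
  intro k
  induction k with
  | zero => intro a ha; simp [Nat.le_zero.mp ha]
  | succ k ih =>
    intro a ha
    rcases eq_or_lt_of_le ha with rfl | h
    · simp
    · have hak : a ≤ k := Nat.lt_succ_iff.mp h
      rw [Finset.sum_Ico_succ_top hak]
      have he : z (k + 1) - z a = (z k - z a) + (z (k + 1) - z k) := by abel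
      rw [he]
      exact le_trans (norm_add_le _ _) (add_le_add_left (ih a hak) _)

private lemma withlp_fst_norm_le {α β : Type*} [NormedAddCommGroup α] [NormedAddCommGroup β]
    (w : WithLp 2 (α × β)) : ‖w.fst‖ ≤ ‖w‖ := by
  have h := WithLp.prod_norm_sq_eq_of_L2 w
  nlinarith [norm_nonneg w, norm_nonneg w.fst, norm_nonneg w.snd]

private lemma withlp_snd_norm_le {α β : Type*} [NormedAddCommGroup α] [NormedAddCommGroup β]
    (w : WithLp 2 (α × β)) : ‖w.snd‖ ≤ ‖w‖ := by
  have h := WithLp.prod_norm_sq_eq_of_L2 w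
  nlinarith [norm_nonneg w, norm_nonneg w.fst, norm_nonneg w.snd]

private lemma withlp_pair_norm_le {α β : Type*} [NormedAddCommGroup α] [NormedAddCommGroup β]
    (a : α) (b : β) : ‖(WithLp.equiv 2 (α × β)).symm (a, b)‖ ≤ ‖a‖ + ‖b‖ := by
  have h := WithLp.prod_norm_sq_eq_of_L2 ((WithLp.equiv 2 (α × β)).symm (a, b))
  have h1 : ((WithLp.equiv 2 (α × β)).symm (a, b)).fst = a := rfl
  have h2 : ((WithLp.equiv 2 (α × β)).symm (a, b)).snd = b := rfl
  rw [h1, h2] at h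
  nlinarith [norm_nonneg ((WithLp.equiv 2 (α × β)).symm (a, b)), norm_nonneg a, norm_nonneg b]

/-- Lemma 10: error bound for delayed gradient descent-ascent on
strongly convex-strongly concave functions:
`‖e_k‖ ≤ 2αLτmax(4L²/μ + 4L)·max_{k−2τmax ≤ t ≤ k} ‖z_t − z*‖`. -/
theorem DGDA_scsc_error_bound
    {m n : ℕ}
    (f : EuclideanSpace ℝ (Fin m) → EuclideanSpace ℝ (Fin n) → ℝ)
    (gx : EuclideanSpace ℝ (Fin m) → EuclideanSpace ℝ (Fin n) → EuclideanSpace ℝ (Fin m))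
    (gy : EuclideanSpace ℝ (Fin m) → EuclideanSpace ℝ (Fin n) → EuclideanSpace ℝ (Fin n))
    (hgx : ∀ x y, HasGradientAt (fun x' => f x' y) (gx x y) x)
    (hgy : ∀ x y, HasGradientAt (fun y' => f x y') (gy x y) y)
    (μ L : ℝ) (hμ : 0 < μ) (hLμ : μ ≤ L)
    (hSC : ∀ x₁ x₂ y, f x₁ y + inner ℝ (gx x₁ y) (x₂ - x₁) + μ / 2 * ‖x₂ - x₁‖ ^ 2 ≤ f x₂ y)
    (hSCC : ∀ x y₁ y₂, f x y₂ ≤ f x y₁ + inner ℝ (gy x y₁) (y₂ - y₁) - μ / 2 * ‖y₂ - y₁‖ ^ 2)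
    (hLx : ∀ x₁ y₁ x₂ y₂, ‖gx x₁ y₁ - gx x₂ y₂‖ ≤ L * (‖x₁ - x₂‖ + ‖y₁ - y₂‖))
    (hLy : ∀ x₁ y₁ x₂ y₂, ‖gy x₁ y₁ - gy x₂ y₂‖ ≤ L * (‖x₁ - x₂‖ + ‖y₁ - y₂‖))
    -- saddle point
    (xstar : EuclideanSpace ℝ (Fin m)) (ystar : EuclideanSpace ℝ (Fin n))
    (hsaddle : ∀ x y, f xstar y ≤ f xstar ystar ∧ f xstar ystar ≤ f x ystar)
    (zstar : WithLp 2 (EuclideanSpace ℝ (Fin m) × EuclideanSpace ℝ (Fin n)))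
    (hzstar : zstar = (WithLp.equiv 2 _).symm (xstar, ystar))
    -- the operator Φ
    (Φ : WithLp 2 (EuclideanSpace ℝ (Fin m) × EuclideanSpace ℝ (Fin n)) →
         WithLp 2 (EuclideanSpace ℝ (Fin m) × EuclideanSpace ℝ (Fin n)))
    (hΦ : ∀ z, Φ z =
      (WithLp.equiv 2 (EuclideanSpace ℝ (Fin m) × EuclideanSpace ℝ (Fin n))).symm
        (gx (WithLp.equiv 2 _ z).1 (WithLp.equiv 2 _ z).2,
         -(gy (WithLp.equiv 2 _ z).1 (WithLp.equiv 2 _ z).2)))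
    -- step size, delays, iterates (indices below 1 refer to z 1)
    (α : ℝ) (hα : 0 < α)
    (τ : ℕ → ℕ) (τmax : ℕ) (hτmax : 1 ≤ τmax) (hτ : ∀ k, τ k ≤ τmax)
    (z : ℕ → WithLp 2 (EuclideanSpace ℝ (Fin m) × EuclideanSpace ℝ (Fin n)))
    (hstep : ∀ k, 1 ≤ k → z (k + 1) = z k - α • Φ (z (max (k - τ k) 1))) :
    ∀ k, 1 ≤ k →
      ‖Φ (z k) - Φ (z (max (k - τ k) 1))‖ ≤
        2 * α * (L * τmax * (4 * L ^ 2 / μ + 4 * L)) *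
          (Finset.Icc (k - 2 * τmax) k).sup'
            (Finset.nonempty_Icc.2 (Nat.sub_le _ _))
            (fun t => ‖z (max t 1) - zstar‖) := by
  have hL : (0:ℝ) < L := lt_of_lt_of_le hμ hLμ
  -- gradients vanish at the saddle point
  have hgx0 : gx xstar ystar = 0 :=
    grad_eq_zero_of_isMin (hgx xstar ystar) (fun x => (hsaddle x ystar).2)
  have hgy0 : gy xstar ystar = 0 :=
    grad_eq_zero_of_isMax (hgy xstar ystar) (fun y => (hsaddle xstar y).1)
  have hΦ0 : Φ zstar = 0 := by
    rw [hΦ, hzstar]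
    simp [hgx0, hgy0]
  -- Lipschitz property of Φ (crude constant 4L)
  have hlip : ∀ w₁ w₂, ‖Φ w₁ - Φ w₂‖ ≤ 4 * L * ‖w₁ - w₂‖ := by
    intro w₁ w₂
    have hsub : ∀ a b : EuclideanSpace ℝ (Fin m) × EuclideanSpace ℝ (Fin n),
        (WithLp.equiv 2 _).symm a - (WithLp.equiv 2 _).symm b = (WithLp.equiv 2 _).symm (a - b) :=
      fun _ _ => rfl
    rw [hΦ w₁, hΦ w₂, hsub, Prod.mk_sub_mk]
    have hx : ‖(WithLp.equiv 2 _ w₁).1 - (WithLp.equiv 2 _ w₂).1‖ ≤ ‖w₁ - w₂‖ := by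
      change ‖(w₁ - w₂).fst‖ ≤ ‖w₁ - w₂‖
      exact withlp_fst_norm_le (w₁ - w₂)
    have hy : ‖(WithLp.equiv 2 _ w₁).2 - (WithLp.equiv 2 _ w₂).2‖ ≤ ‖w₁ - w₂‖ := by
      change ‖(w₁ - w₂).snd‖ ≤ ‖w₁ - w₂‖
      exact withlp_snd_norm_le (w₁ - w₂)
    calc ‖(WithLp.equiv 2 _).symm
            (gx (WithLp.equiv 2 _ w₁).1 (WithLp.equiv 2 _ w₁).2 -
              gx (WithLp.equiv 2 _ w₂).1 (WithLp.equiv 2 _ w₂).2,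
             -gy (WithLp.equiv 2 _ w₁).1 (WithLp.equiv 2 _ w₁).2 -
              -gy (WithLp.equiv 2 _ w₂).1 (WithLp.equiv 2 _ w₂).2)‖
        ≤ ‖gx (WithLp.equiv 2 _ w₁).1 (WithLp.equiv 2 _ w₁).2 -
              gx (WithLp.equiv 2 _ w₂).1 (WithLp.equiv 2 _ w₂).2‖ +
          ‖-gy (WithLp.equiv 2 _ w₁).1 (WithLp.equiv 2 _ w₁).2 -
              -gy (WithLp.equiv 2 _ w₂).1 (WithLp.equiv 2 _ w₂).2‖ :=
          withlp_pair_norm_le _ _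
      _ ≤ L * (‖(WithLp.equiv 2 _ w₁).1 - (WithLp.equiv 2 _ w₂).1‖ +
                ‖(WithLp.equiv 2 _ w₁).2 - (WithLp.equiv 2 _ w₂).2‖) +
          L * (‖(WithLp.equiv 2 _ w₁).1 - (WithLp.equiv 2 _ w₂).1‖ +
                ‖(WithLp.equiv 2 _ w₁).2 - (WithLp.equiv 2 _ w₂).2‖) := by
          gcongr ?_ + ?_
          · exact hLx _ _ _ _
          · rw [neg_sub_neg, norm_sub_rev]
            exact hLy _ _ _ _
      _ ≤ L * (‖w₁ - w₂‖ + ‖w₁ - w₂‖) + L * (‖w₁ - w₂‖ + ‖w₁ - w₂‖) := by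
          gcongr
      _ = 4 * L * ‖w₁ - w₂‖ := by ring
  have hΦnorm : ∀ w, ‖Φ w‖ ≤ 4 * L * ‖w - zstar‖ := by
    intro w
    have := hlip w zstar
    rwa [hΦ0, sub_zero] at this
  intro k hk
  set M := (Finset.Icc (k - 2 * τmax) k).sup'
      (Finset.nonempty_Icc.2 (Nat.sub_le _ _))
      (fun t => ‖z (max t 1) - zstar‖) with hMdef
  have hkmem : k ∈ Finset.Icc (k - 2 * τmax) k := by
    simp [Finset.mem_Icc]
  have hM0 : 0 ≤ M := le_trans (norm_nonneg _)
      (Finset.le_sup' (fun t => ‖z (max t 1) - zstar‖) hkmem)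
  set a := max (k - τ k) 1 with hadef
  have ha1 : 1 ≤ a := le_max_right _ 1
  have hak : a ≤ k := by omega
  -- per-step bound
  have hstepbd : ∀ j ∈ Finset.Ico a k, ‖z (j + 1) - z j‖ ≤ α * (4 * L * M) := by
    intro j hj
    rw [Finset.mem_Ico] at hj
    have hj1 : 1 ≤ j := le_trans ha1 hj.1
    rw [hstep j hj1]
    have he : z j - α • Φ (z (max (j - τ j) 1)) - z j
        = -(α • Φ (z (max (j - τ j) 1))) := by abel
    rw [he, norm_neg, norm_smul, Real.norm_eq_abs, abs_of_pos hα]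
    have hmem : j - τ j ∈ Finset.Icc (k - 2 * τmax) k := by
      have h1 := hτ j
      have h2 := hτ k
      simp only [Finset.mem_Icc]
      omega
    have hsup : ‖z (max (j - τ j) 1) - zstar‖ ≤ M :=
      Finset.le_sup' (fun t => ‖z (max t 1) - zstar‖) hmem
    have : ‖Φ (z (max (j - τ j) 1))‖ ≤ 4 * L * M :=
      le_trans (hΦnorm _) (by nlinarith)
    nlinarith
  -- telescoping
  have htel : ‖z k - z a‖ ≤ ∑ j ∈ Finset.Ico a k, ‖z (j + 1) - z j‖ :=
    telescope_norm_le z k a hak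
  have hsum : ∑ j ∈ Finset.Ico a k, ‖z (j + 1) - z j‖ ≤ (τmax : ℝ) * (α * (4 * L * M)) := by
    have h1 := Finset.sum_le_card_nsmul _ _ _ hstepbd
    rw [Nat.card_Ico, nsmul_eq_mul] at h1
    have h2 : ((k - a : ℕ) : ℝ) ≤ (τmax : ℝ) := by
      have := hτ k
      have : k - a ≤ τmax := by omega
      exact_mod_cast this
    have h3 : (0:ℝ) ≤ α * (4 * L * M) := by positivity
    calc ∑ j ∈ Finset.Ico a k, ‖z (j + 1) - z j‖
        ≤ ((k - a : ℕ) : ℝ) * (α * (4 * L * M)) := h1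
      _ ≤ (τmax : ℝ) * (α * (4 * L * M)) := by
          exact mul_le_mul_of_nonneg_right h2 h3
  have hdiv : 4 * L ≤ 4 * L ^ 2 / μ := by
    rw [le_div_iff₀ hμ]
    nlinarith
  have key : 16 * L ^ 2 ≤ 2 * (L * (4 * L ^ 2 / μ + 4 * L)) := by
    have h4 := mul_le_mul_of_nonneg_left hdiv hL.le
    nlinarith
  have hcoef : (0:ℝ) ≤ (τmax : ℝ) * α * M :=
    mul_nonneg (mul_nonneg (Nat.cast_nonneg _) hα.le) hM0
  calc ‖Φ (z k) - Φ (z a)‖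
      ≤ 4 * L * ‖z k - z a‖ := hlip _ _
    _ ≤ 4 * L * ((τmax : ℝ) * (α * (4 * L * M))) := by
        exact mul_le_mul_of_nonneg_left (le_trans htel hsum) (by linarith)
    _ = (τmax : ℝ) * α * M * (16 * L ^ 2) := by ring
    _ ≤ (τmax : ℝ) * α * M * (2 * (L * (4 * L ^ 2 / μ + 4 * L))) :=
        mul_le_mul_of_nonneg_left key hcoef
    _ = 2 * α * (L * τmax * (4 * L ^ 2 / μ + 4 * L)) * M := by ring
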